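/- arXiv:1004.3411 — 2 statements merged into one kernel-verified Lean document; each statement's English description precedes it below -/
import Mathlib

section
/- Let Δ = conv(v₁,…,v_{2d}) ⊂ ℝ^{2d-1} be a (2d-1)-dimensional lattice simplex whose codimension-1 facets are basic lattice simplices, and suppose Int(kΔ) ∩ ℤ^{2d-1} = ∅ for k = 1,…,d-1. Then the h*-polynomial of Δ is 1 + (n-1)t^d for some integer n ≥ 1; equivalently, the half-open parallelepiped Par(Δ) = {∑λᵢ(vᵢ,1) : 0 ≤ λᵢ < 1} ⊂ ℝ^{2d} contains no lattice points with last coordinate in {1,…,d-1} or {d+1,…,2d-1}. -/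
open Pointwise

lemma aux_int (n : ℕ) (ι : Type*) [Fintype ι] (hcard : Fintype.card ι = n + 1)
    (vb : ι → Fin n → ℝ) (haff : AffineIndependent ℝ vb)
    (l : ι → ℝ) (hpos : ∀ i, 0 < l i)
    (k : ℕ) (hk1 : 1 ≤ k) (hsum : ∑ i, l i = (k : ℝ)) :
    (fun j => ∑ i, l i * vb i j) ∈ interior ((k : ℝ) • convexHull ℝ (Set.range vb)) := by
  have hk0 : (k : ℝ) ≠ 0 := by positivity
  have htop : affineSpan ℝ (Set.range vb) = ⊤ := by
    rw [haff.affineSpan_eq_top_iff_card_eq_finrank_add_one]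
    simp [hcard, Module.finrank_pi]
  let B : AffineBasis ι ℝ (Fin n → ℝ) := ⟨vb, haff, htop⟩
  have hBcoe : ⇑B = vb := rfl
  rw [interior_smul₀ hk0]
  set w : ι → ℝ := fun i => l i / k with hw
  have hw1 : ∑ i, w i = 1 := by
    simp only [hw]
    rw [← Finset.sum_div, hsum, div_self hk0]
  refine ⟨Finset.univ.affineCombination ℝ vb w, ?_, ?_⟩
  · rw [← hBcoe, B.interior_convexHull]
    intro i
    have h := B.coord_apply_combination_of_mem (Finset.mem_univ i) hw1
    rw [hBcoe] at h
    exact lt_of_lt_of_eq (div_pos (hpos i) (by positivity)) h.symm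
  · rw [Finset.univ.affineCombination_eq_linear_combination vb w hw1]
    ext j
    simp only [Pi.smul_apply, Finset.smul_sum, Finset.sum_apply]
    refine Finset.sum_congr rfl fun i _ => ?_
    simp only [hw, Pi.smul_apply, smul_eq_mul]
    field_simp

lemma aux_coord (n : ℕ) (b : Module.Basis (Fin n) ℤ (Fin n → ℤ)) (k : Fin n) (x : Fin n → ℤ) :
    b.repr x k = ∑ j, x j * b.repr (Pi.single j 1) k := by
  have hx : x = ∑ j, x j • Pi.single j (1 : ℤ) := by
    funext j'
    simp [Finset.sum_apply, Pi.single_apply, Finset.sum_ite_eq']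
  conv_lhs => rw [hx]
  rw [map_sum]
  simp only [map_smul, Finsupp.coe_finset_sum, Finset.sum_apply, Finsupp.coe_smul,
    Pi.smul_apply, smul_eq_mul]

/-- The codimension-1 facet of the simplex `conv(v 0, …, v (2d-1))` opposite the vertex `v j`
is a basic lattice simplex: the differences of its vertices with respect to one of them
extend to a `ℤ`-basis of `ℤ^{2d-1}`. -/
def FacetBasic (d : ℕ) (v : Fin (2*d) → Fin (2*d-1) → ℤ) (j : Fin (2*d)) : Prop :=
  ∃ (b : Module.Basis (Fin (2*d-1)) ℤ (Fin (2*d-1) → ℤ)) (i₀ : Fin (2*d))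
    (e : {i : Fin (2*d) // i ≠ j ∧ i ≠ i₀} → Fin (2*d-1)),
    i₀ ≠ j ∧ Function.Injective e ∧
    ∀ i : {i : Fin (2*d) // i ≠ j ∧ i ≠ i₀}, v i.1 - v i₀ = b (e i)

/-- If all codimension-1 facets of the `(2d-1)`-dimensional lattice simplex `Δ` are basic and
the interiors of `kΔ` (`k = 1, …, d-1`) contain no lattice points, then `h*_Δ = 1 + (n-1)t^d`:
equivalently, the half-open parallelepiped spanned by the vectors `(vᵢ, 1)` contains no lattice
point whose last coordinate lies in `{1, …, d-1} ∪ {d+1, …, 2d-1}`, i.e. any point of it with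
integral coordinates has coordinate sum `0` or `d`. -/
theorem hstar_concentrated_of_basic_facets_and_hollow_multiples (d : ℕ) (hd : 1 ≤ d)
    (v : Fin (2*d) → Fin (2*d-1) → ℤ)
    (haff : AffineIndependent ℝ (fun i => fun j => (v i j : ℝ)))
    (hbasic : ∀ j : Fin (2*d), FacetBasic d v j)
    (hhollow : ∀ k : ℕ, 1 ≤ k → k ≤ d - 1 →
      ∀ x : Fin (2*d-1) → ℤ,
        (fun j => (x j : ℝ)) ∉
          interior ((k : ℝ) • convexHull ℝ (Set.range fun i => fun j => (v i j : ℝ)))) :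
    ∀ l : Fin (2*d) → ℝ, (∀ i, 0 ≤ l i ∧ l i < 1) →
      (∀ j, ∃ m : ℤ, ∑ i, l i * (v i j : ℝ) = (m : ℝ)) →
      (∃ m : ℤ, ∑ i, l i = (m : ℝ)) →
      (∑ i, l i = 0 ∨ ∑ i, l i = d) := by
  intro l hl hX hm
  obtain ⟨m, hm⟩ := hm
  choose X hXX using hX
  by_cases hzero : ∃ j, l j = 0
  · -- Case 1: some coefficient vanishes; basicness forces all to vanish.
    left
    obtain ⟨j, hj⟩ := hzero
    obtain ⟨b, i₀, e, hi₀, he, hdiff⟩ := hbasic j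
    set z : Fin (2*d-1) → ℤ := fun j' => X j' - m * v i₀ j' with hz
    have hzr : ∀ j', (z j' : ℝ) =
        ∑ i : {i : Fin (2*d) // i ≠ j ∧ i ≠ i₀}, l i.1 * ((b (e i) j' : ℤ) : ℝ) := by
      intro j'
      have hb : ∀ i : {i : Fin (2*d) // i ≠ j ∧ i ≠ i₀},
          ((b (e i) j' : ℤ) : ℝ) = (v i.1 j' : ℝ) - (v i₀ j' : ℝ) := by
        intro i
        have h := congrFun (hdiff i) j'
        rw [Pi.sub_apply] at h
        rw [← h]
        push_cast
        ring
      have h1 : (z j' : ℝ) = ∑ i : Fin (2*d), l i * ((v i j' : ℝ) - (v i₀ j' : ℝ)) := by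
        simp only [hz]
        push_cast
        rw [← hXX j', ← hm, Finset.sum_mul, ← Finset.sum_sub_distrib]
        exact Finset.sum_congr rfl fun i _ => by ring
      rw [h1]
      rw [show (∑ i : {i : Fin (2*d) // i ≠ j ∧ i ≠ i₀}, l i.1 * ((b (e i) j' : ℤ) : ℝ)) =
          ∑ i : {i : Fin (2*d) // i ≠ j ∧ i ≠ i₀}, l i.1 * ((v i.1 j' : ℝ) - (v i₀ j' : ℝ))
        from Finset.sum_congr rfl fun i _ => by rw [hb]]
      rw [← Finset.sum_subtype (Finset.univ.filter fun i => i ≠ j ∧ i ≠ i₀)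
        (by simp) (fun i => l i * ((v i j' : ℝ) - (v i₀ j' : ℝ)))]
      rw [← Finset.sum_filter_add_sum_filter_not Finset.univ (fun i => i ≠ j ∧ i ≠ i₀)
        (fun i => l i * ((v i j' : ℝ) - (v i₀ j' : ℝ)))]
      have h2 : ∑ i ∈ Finset.univ.filter (fun i => ¬(i ≠ j ∧ i ≠ i₀)),
          l i * ((v i j' : ℝ) - (v i₀ j' : ℝ)) = 0 := by
        refine Finset.sum_eq_zero fun i hi => ?_
        simp only [Finset.mem_filter, not_and, not_not, ne_eq] at hi
        by_cases hij : i = j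
        · rw [hij, hj]; ring
        · rw [hi.2 hij]; ring
      rw [h2, add_zero]
    -- coefficient extraction
    have hli : ∀ i₁ : {i : Fin (2*d) // i ≠ j ∧ i ≠ i₀}, l i₁.1 = ((b.repr z (e i₁) : ℤ) : ℝ) := by
      intro i₁
      have hc : ((b.repr z (e i₁) : ℤ) : ℝ) =
          ∑ j', (z j' : ℝ) * ((b.repr (Pi.single j' 1) (e i₁) : ℤ) : ℝ) := by
        rw [aux_coord]
        push_cast
        rfl
      rw [hc]
      symm
      calc ∑ j', (z j' : ℝ) * ((b.repr (Pi.single j' 1) (e i₁) : ℤ) : ℝ)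
          = ∑ j', (∑ i : {i : Fin (2*d) // i ≠ j ∧ i ≠ i₀}, l i.1 * ((b (e i) j' : ℤ) : ℝ)) *
              ((b.repr (Pi.single j' 1) (e i₁) : ℤ) : ℝ) :=
            Finset.sum_congr rfl fun j' _ => by rw [hzr j']
        _ = ∑ i : {i : Fin (2*d) // i ≠ j ∧ i ≠ i₀},
              l i.1 * ∑ j', ((b (e i) j' : ℤ) : ℝ) * ((b.repr (Pi.single j' 1) (e i₁) : ℤ) : ℝ) := by
            simp only [Finset.sum_mul]
            rw [Finset.sum_comm]
            simp only [Finset.mul_sum]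
            exact Finset.sum_congr rfl fun i _ => Finset.sum_congr rfl fun j' _ => by ring
        _ = ∑ i : {i : Fin (2*d) // i ≠ j ∧ i ≠ i₀},
              l i.1 * ((b.repr (b (e i)) (e i₁) : ℤ) : ℝ) := by
            refine Finset.sum_congr rfl fun i _ => ?_
            rw [aux_coord]
            push_cast
            rfl
        _ = l i₁.1 := by
            have hrepr : ∀ i : {i : Fin (2*d) // i ≠ j ∧ i ≠ i₀},
                (b.repr (b (e i)) (e i₁) : ℤ) = if i = i₁ then 1 else 0 := by
              intro i
              rw [Module.Basis.repr_self, Finsupp.single_apply]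
              congr 1
              simp [he.eq_iff]
            simp only [hrepr]
            simp [Finset.sum_ite_eq']
    have hlz : ∀ i, i ≠ i₀ → l i = 0 := by
      intro i hi
      by_cases hij : i = j
      · rw [hij, hj]
      · have h := hli ⟨i, hij, hi⟩
        have h0 : (0 : ℝ) ≤ ((b.repr z (e ⟨i, hij, hi⟩) : ℤ) : ℝ) := h ▸ (hl i).1
        have h1 : ((b.repr z (e ⟨i, hij, hi⟩) : ℤ) : ℝ) < 1 := h ▸ (hl i).2
        have : (b.repr z (e ⟨i, hij, hi⟩) : ℤ) = 0 := by
          have a0 : (0 : ℤ) ≤ b.repr z (e ⟨i, hij, hi⟩) := by exact_mod_cast h0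
          have a1 : (b.repr z (e ⟨i, hij, hi⟩) : ℤ) < 1 := by exact_mod_cast h1
          omega
        rw [h, this]
        norm_num
    have hsum0 : ∑ i, l i = l i₀ :=
      Finset.sum_eq_single i₀ (fun i _ hi => hlz i hi) (fun h => absurd (Finset.mem_univ i₀) h)
    have hm0 : m = 0 := by
      have h0 : (0 : ℝ) ≤ (m : ℝ) := by rw [← hm, hsum0]; exact (hl i₀).1
      have h1 : (m : ℝ) < 1 := by rw [← hm, hsum0]; exact (hl i₀).2
      have a0 : (0 : ℤ) ≤ m := by exact_mod_cast h0
      have a1 : m < 1 := by exact_mod_cast h1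
      omega
    rw [hm, hm0]
    norm_num
  · -- Case 2: all coefficients positive.
    right
    push_neg at hzero
    have hpos : ∀ i, 0 < l i := fun i => lt_of_le_of_ne (hl i).1 (Ne.symm (hzero i))
    have hne : Nonempty (Fin (2*d)) := ⟨⟨0, by omega⟩⟩
    have main : ∀ (l' : Fin (2*d) → ℝ), (∀ i, 0 < l' i) → ∀ (X' : Fin (2*d-1) → ℤ),
        (∀ j', ∑ i, l' i * (v i j' : ℝ) = (X' j' : ℝ)) → ∀ k : ℕ, 1 ≤ k →
        (∑ i, l' i = (k : ℝ)) → d ≤ k := by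
      intro l' hp X' hX' k hk1 hks
      by_contra hcon
      refine hhollow k hk1 (by omega) X' ?_
      have heq : (fun j => ((X' j : ℤ) : ℝ)) = fun j => ∑ i, l' i * (v i j : ℝ) := by
        funext j'
        rw [hX' j']
      rw [heq]
      exact aux_int (2*d-1) (Fin (2*d)) (by simp; omega)
        (fun i => fun j => (v i j : ℝ)) haff l' hp k hk1 hks
    have hmpos : 0 < m := by
      have : (0 : ℝ) < (m : ℝ) := by
        rw [← hm]
        exact Finset.sum_pos (fun i _ => hpos i) Finset.univ_nonempty
      exact_mod_cast this
    have hmlt : m < 2*d := by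
      have : (m : ℝ) < 2*d := by
        rw [← hm]
        calc ∑ i, l i < ∑ i : Fin (2*d), (1 : ℝ) :=
              Finset.sum_lt_sum_of_nonempty Finset.univ_nonempty (fun i _ => (hl i).2)
          _ = 2*d := by simp
      exact_mod_cast this
    have h1 : d ≤ m.toNat := by
      refine main l hpos X hXX m.toNat (by omega) ?_
      rw [hm]
      congr 1
      omega
    have h2 : d ≤ ((2*d : ℤ) - m).toNat := by
      refine main (fun i => 1 - l i) (fun i => by show (0:ℝ) < 1 - l i; linarith [(hl i).2])
        (fun j' => (∑ i, v i j') - X j') ?_ ((2*d : ℤ) - m).toNat (by omega) ?_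
      · intro j'
        push_cast
        rw [← hXX j']
        rw [Finset.sum_congr rfl (fun (i : Fin (2*d)) _ => by ring :
          ∀ i ∈ Finset.univ, (1 - l i) * (v i j' : ℝ) = (v i j' : ℝ) - l i * (v i j' : ℝ))]
        rw [Finset.sum_sub_distrib]
      · rw [Finset.sum_sub_distrib, hm]
        rw [show (((((2*d : ℤ) - m).toNat : ℕ)) : ℝ) = (((2*d : ℤ) - m : ℤ) : ℝ) by
          rw [← Int.cast_natCast, Int.toNat_of_nonneg (by omega)]]
        have hcard : ∑ _i : Fin (2*d), (1:ℝ) = ((2*d : ℕ) : ℝ) := by simp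
        rw [hcard]
        push_cast
        ring
    have hmd : m = d := by omega
    rw [hm, hmd]
    norm_cast
end

section
/- Let Δ = conv(v₁,…,v_{2d}) ⊂ ℝ^{2d-1} be a (2d-1)-dimensional lattice simplex whose codimension-1 facets are basic and with Int(kΔ) ∩ ℤ^{2d-1} = ∅ for k = 1,…,d-1. If ∑_{i=1}^{2d} λᵢ(vᵢ,1) ∈ ℤ^{2d} with 0 ≤ λᵢ < 1, then either ∑λᵢ = 0 (i.e., all λᵢ = 0) or ∑λᵢ = d, and in the latter case λᵢ ≠ 0 for all i. -/
open Pointwise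

section Aux

variable {n : ℕ}

/-- A `ℤ`-linear functional on `ℤⁿ` applied to an integer vector, computed as a real sum. -/
lemma intFunctional_cast_eval (f : (Fin n → ℤ) →ₗ[ℤ] ℤ) (z : Fin n → ℤ) :
    ∑ t, (z t : ℝ) * (f (Pi.single t 1) : ℝ) = (f z : ℝ) := by
  have hz : z = ∑ t, (z t) • Pi.single t (1 : ℤ) := by
    funext s
    simp [Finset.sum_apply, Pi.single_apply]
  have hfz : f z = ∑ t, (z t) * f (Pi.single t 1) := by
    conv_lhs => rw [hz]
    rw [map_sum]
    refine Finset.sum_congr rfl fun t _ => ?_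
    rw [map_smul, smul_eq_mul]
  rw [hfz]
  push_cast
  ring_nf

/-- If a vector with integer coordinates (as a real vector) lies in the interval
`[0,1)`-combination trap, extract integrality. -/
lemma real_int_zero_of_lt_one {x : ℝ} (m : ℤ) (hm : x = (m : ℝ)) (h0 : 0 ≤ x) (h1 : x < 1) :
    x = 0 := by
  subst hm
  have h0' : (0 : ℤ) ≤ m := by exact_mod_cast h0
  have h1' : m < 1 := by exact_mod_cast h1
  have : m = 0 := by omega
  simp [this]

end Aux

/-- The facet-basicness argument: if one barycentric coordinate vanishes, all vanish. -/
lemma facet_all_zero (d : ℕ) (v : Fin (2*d) → Fin (2*d-1) → ℤ) (j : Fin (2*d))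
    (hb : FacetBasic d v j)
    (l : Fin (2*d) → ℝ) (hl : ∀ i, 0 ≤ l i ∧ l i < 1)
    (hint : ∀ j', ∃ m : ℤ, ∑ i, l i * (v i j' : ℝ) = (m : ℝ))
    (hsum : ∃ m : ℤ, ∑ i, l i = (m : ℝ))
    (hj : l j = 0) : ∀ i, l i = 0 := by
  obtain ⟨b, i₀, e, hi₀j, he, hbe⟩ := hb
  obtain ⟨m, hm⟩ := hsum
  -- the integer vector y = x - m • v i₀
  set y : Fin (2*d-1) → ℤ := fun j' => (hint j').choose - m * v i₀ j' with hy
  have hycast : ∀ j', (y j' : ℝ) = ∑ i, l i * ((v i j' : ℝ) - (v i₀ j' : ℝ)) := by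
    intro j'
    have h1 := (hint j').choose_spec
    have : ∑ i, l i * ((v i j' : ℝ) - (v i₀ j' : ℝ))
        = (∑ i, l i * (v i j' : ℝ)) - (∑ i, l i) * (v i₀ j' : ℝ) := by
      rw [Finset.sum_mul, ← Finset.sum_sub_distrib]
      congr 1; funext i; ring
    rw [this, h1, hm, hy]
    push_cast
    ring
  -- every `l i` with `i ≠ j`, `i ≠ i₀` vanishes
  have key : ∀ i, i ≠ j → i ≠ i₀ → l i = 0 := by
    intro i' hi'j hi'i₀
    set f : (Fin (2*d-1) → ℤ) →ₗ[ℤ] ℤ := b.coord (e ⟨i', hi'j, hi'i₀⟩) with hf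
    -- evaluate the real functional on both sides
    have hFy : ∑ t, (y t : ℝ) * (f (Pi.single t 1) : ℝ) = (f y : ℝ) :=
      intFunctional_cast_eval f y
    have hswap : ∑ t, (y t : ℝ) * (f (Pi.single t 1) : ℝ)
        = ∑ i, l i * ∑ t, ((v i t : ℝ) - (v i₀ t : ℝ)) * (f (Pi.single t 1) : ℝ) := by
      simp_rw [hycast, Finset.sum_mul]
      rw [Finset.sum_comm]
      congr 1; funext i
      rw [Finset.mul_sum]
      congr 1; funext t
      ring
    have hterm : ∀ i : Fin (2*d), l i * ∑ t, ((v i t : ℝ) - (v i₀ t : ℝ))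
        * (f (Pi.single t 1) : ℝ) = if i = i' then l i else 0 := by
      intro i
      have hcast : ∑ t, ((v i t : ℝ) - (v i₀ t : ℝ)) * (f (Pi.single t 1) : ℝ)
          = (f (v i - v i₀) : ℝ) := by
        rw [← intFunctional_cast_eval f (v i - v i₀)]
        refine Finset.sum_congr rfl fun t _ => ?_
        simp only [Pi.sub_apply]
        push_cast
        ring
      rw [hcast]
      by_cases hij : i = j
      · subst hij; simp [hj]
      by_cases hii₀ : i = i₀
      · subst hii₀
        rw [if_neg (fun h => hi'i₀ h.symm), sub_self, map_zero]
        simp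
      · rw [hbe ⟨i, hij, hii₀⟩, hf]
        by_cases hii' : i = i'
        · subst hii'
          rw [Module.Basis.coord_apply, b.repr_self]
          simp
        · have hne : e ⟨i', hi'j, hi'i₀⟩ ≠ e ⟨i, hij, hii₀⟩ := by
            intro hcontr
            exact hii' (congrArg Subtype.val (he hcontr)).symm
          rw [Module.Basis.coord_apply, b.repr_self, Finsupp.single_apply]
          simp [hne, if_neg (Ne.symm hne), hii']
    have hli' : l i' = (f y : ℝ) := by
      rw [← hFy, hswap]
      simp_rw [hterm]
      simp
    refine real_int_zero_of_lt_one (f y) hli' (hl i').1 (hl i').2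
  -- deduce the remaining two coordinates vanish
  have hsum' : ∑ i, l i = l i₀ := by
    rw [Finset.sum_eq_single i₀]
    · intro i _ hi
      by_cases hij : i = j
      · subst hij; exact hj
      · exact key i hij hi
    · simp
  have hi₀0 : l i₀ = 0 := by
    refine real_int_zero_of_lt_one m ?_ (hl i₀).1 (hl i₀).2
    rw [← hsum', hm]
  intro i
  by_cases hij : i = j
  · subst hij; exact hj
  by_cases hii₀ : i = i₀
  · subst hii₀; exact hi₀0
  · exact key i hij hii₀

/-- A point with all-positive barycentric coordinates summing to `k` lies in the interior of
the `k`-th dilate of the simplex. -/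
lemma mem_interior_dilate (d : ℕ) (hd : 1 ≤ d) (v : Fin (2*d) → Fin (2*d-1) → ℤ)
    (haff : AffineIndependent ℝ (fun i => fun j => (v i j : ℝ)))
    (k : ℕ) (hk : 1 ≤ k)
    (w : Fin (2*d) → ℝ) (hw : ∀ i, 0 < w i) (hws : ∑ i, w i = (k : ℝ))
    (x : Fin (2*d-1) → ℝ) (hx : ∀ j, x j = ∑ i, w i * (v i j : ℝ)) :
    x ∈ interior ((k : ℝ) • convexHull ℝ (Set.range fun i => fun j => (v i j : ℝ))) := by
  set vr : Fin (2*d) → (Fin (2*d-1) → ℝ) := fun i j => (v i j : ℝ) with hvr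
  have htop : affineSpan ℝ (Set.range vr) = ⊤ := by
    rw [haff.affineSpan_eq_top_iff_card_eq_finrank_add_one]
    simp only [Fintype.card_fin]
    rw [Module.finrank_fintype_fun_eq_card]
    simp only [Fintype.card_fin]
    omega
  set b : AffineBasis (Fin (2*d)) ℝ (Fin (2*d-1) → ℝ) := ⟨vr, haff, htop⟩ with hb
  have hbc : ⇑b = vr := rfl
  have hk0 : (k : ℝ) ≠ 0 := by positivity
  have hws1 : ∑ i, w i / (k : ℝ) = 1 := by
    rw [← Finset.sum_div, hws, div_self hk0]
  have hq : (k : ℝ)⁻¹ • x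
      = Finset.univ.affineCombination ℝ (⇑b) (fun i => w i / (k : ℝ)) := by
    rw [Finset.affineCombination_eq_linear_combination _ _ _ hws1]
    funext j
    simp only [Pi.smul_apply, smul_eq_mul, Finset.sum_apply, hbc, hvr, hx]
    rw [Finset.mul_sum]
    refine Finset.sum_congr rfl fun i _ => ?_
    ring
  have hint : interior (convexHull ℝ (Set.range vr)) = {z | ∀ i, 0 < b.coord i z} :=
    b.interior_convexHull
  rw [interior_smul₀ hk0, Set.mem_smul_set_iff_inv_smul_mem₀ hk0]
  show (k : ℝ)⁻¹ • x ∈ interior (convexHull ℝ (Set.range vr))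
  rw [hint]
  intro i
  show 0 < b.coord i ((k : ℝ)⁻¹ • x)
  rw [hq, b.coord_apply_combination_of_mem (Finset.mem_univ i) hws1]
  exact div_pos (hw i) (by positivity)

theorem parallelepiped_lattice_points_sum_zero_or_d (d : ℕ) (hd : 1 ≤ d)
    (v : Fin (2*d) → Fin (2*d-1) → ℤ)
    (haff : AffineIndependent ℝ (fun i => fun j => (v i j : ℝ)))
    (hbasic : ∀ j : Fin (2*d), FacetBasic d v j)
    (hhollow : ∀ k : ℕ, 1 ≤ k → k ≤ d - 1 →
      ∀ x : Fin (2*d-1) → ℤ,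
        (fun j => (x j : ℝ)) ∉
          interior ((k : ℝ) • convexHull ℝ (Set.range fun i => fun j => (v i j : ℝ))))
    (l : Fin (2*d) → ℝ) (hl : ∀ i, 0 ≤ l i ∧ l i < 1)
    (hint : ∀ j, ∃ m : ℤ, ∑ i, l i * (v i j : ℝ) = (m : ℝ))
    (hsum : ∃ m : ℤ, ∑ i, l i = (m : ℝ)) :
    (∀ i, l i = 0) ∨ (∑ i, l i = d ∧ ∀ i, l i ≠ 0) := by
  by_cases hpos : ∀ i, 0 < l i
  · right
    obtain ⟨m, hm⟩ := hsum
    have hne : Nonempty (Fin (2*d)) := ⟨⟨0, by omega⟩⟩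
    have hsumpos : (0 : ℝ) < ∑ i, l i :=
      Finset.sum_pos (fun i _ => hpos i) Finset.univ_nonempty
    have hm1 : 1 ≤ m := by
      have : (0 : ℝ) < (m : ℝ) := hm ▸ hsumpos
      exact_mod_cast this
    have hsumlt : ∑ i, l i < (2*d : ℝ) := by
      calc ∑ i, l i < ∑ _i : Fin (2*d), (1:ℝ) :=
            Finset.sum_lt_sum_of_nonempty Finset.univ_nonempty (fun i _ => (hl i).2)
        _ = (2*d : ℝ) := by simp
    have hmlt : m < 2*(d:ℤ) := by
      have : (m : ℝ) < (2*d : ℝ) := hm ▸ hsumlt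
      exact_mod_cast this
    set x : Fin (2*d-1) → ℤ := fun j => (hint j).choose with hxdef
    have hx : ∀ j, ((x j : ℝ)) = ∑ i, l i * (v i j : ℝ) :=
      fun j => ((hint j).choose_spec).symm
    -- first bound : d ≤ m
    have hdm : (d : ℤ) ≤ m := by
      by_contra hcon
      push_neg at hcon
      have hk1 : 1 ≤ m.toNat := by omega
      have hkd : m.toNat ≤ d - 1 := by omega
      refine hhollow m.toNat hk1 hkd x ?_
      refine mem_interior_dilate d hd v haff m.toNat hk1 l hpos ?_ _ hx
      rw [hm]
      congr 1
      omega
    -- second bound : m ≤ d, via the complementary weights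
    have hmd : m ≤ (d : ℤ) := by
      by_contra hcon
      push_neg at hcon
      set k' : ℕ := (2*(d:ℤ) - m).toNat with hk'
      have hk1 : 1 ≤ k' := by omega
      have hkd : k' ≤ d - 1 := by omega
      set x' : Fin (2*d-1) → ℤ := fun j => (∑ i, v i j) - x j with hx'def
      refine hhollow k' hk1 hkd x' ?_
      refine mem_interior_dilate d hd v haff k' hk1 (fun i => 1 - l i)
        (fun i => show (0:ℝ) < 1 - l i by linarith [(hl i).2]) ?_ _ ?_
      · rw [Finset.sum_sub_distrib, hm]
        simp only [Finset.sum_const, Finset.card_univ, Fintype.card_fin, nsmul_eq_mul, mul_one]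
        have : (k' : ℤ) = 2*(d:ℤ) - m := by omega
        have := congrArg (fun z : ℤ => (z : ℝ)) this
        push_cast at this ⊢
        linarith
      · intro j
        show ((x' j : ℤ) : ℝ) = _
        simp only [hx'def]
        push_cast
        rw [hx j]
        simp [sub_mul, Finset.sum_sub_distrib]
    have hmdeq : m = (d : ℤ) := le_antisymm hmd hdm
    constructor
    · rw [hm, hmdeq]; push_cast; ring
    · exact fun i => (hpos i).ne'
  · left
    push_neg at hpos
    obtain ⟨j, hj⟩ := hpos
    have hj0 : l j = 0 := le_antisymm hj (hl j).1
    exact facet_all_zero d v j (hbasic j) l hl hint hsum hj0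
end
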